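/- Let A and B be n×n complex positive definite matrices with A ≤ B in the Loewner order, and let p ∈ (0,1]. Then J_p(A,B) − 2·R_p(A,B) ≤ T_p(A|B) ≤ J_p(A,B) − 2·L_p(A,B) in the Loewner order, where J_p(A,B) := (1/2)·(A #_p B − A ♮_{p−1} B + B − A), L_p(A,B) := (1/24)·(p−1)·(p−2)·(A #_p B − 3·A ♮_{p−1} B + 3·A ♮_{p−2} B − A ♮_{p−3} B) and R_p(A,B) := (1/24)·(p−1)·(p−2)·(A ♮_3 B − 3·A ♮_2 B + 3·B − A). -/

import Mathlib

open Matrix ComplexOrder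

/-- Real power of a (Hermitian) complex matrix via the continuous functional calculus,
corresponding to `Matrix.PosDef.rpow` on positive definite matrices. -/
noncomputable def mrpow {n : Type*} [Fintype n] [DecidableEq n]
    (A : Matrix n n ℂ) (r : ℝ) : Matrix n n ℂ :=
  cfc (fun t : ℝ => t ^ r) A

/-- The Loewner order: `loe X Y` means `Y - X` is positive semidefinite. -/
def loe {n : Type*} [Fintype n] (X Y : Matrix n n ℂ) : Prop :=
  (Y - X).PosSemidef

/-- `A ♮ᵣ B = A^{1/2} (A^{-1/2} B A^{-1/2})^r A^{1/2}`; for `r ∈ [0,1]` this is the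
weighted geometric mean `A #ᵣ B`. -/
noncomputable def natu {n : Type*} [Fintype n] [DecidableEq n]
    (A B : Matrix n n ℂ) (r : ℝ) : Matrix n n ℂ :=
  mrpow A (1 / 2) * mrpow (mrpow A (-(1 / 2)) * B * mrpow A (-(1 / 2))) r * mrpow A (1 / 2)

/-- The Tsallis relative operator entropy `T_p(A|B) = (A #_p B - A) / p`. -/
noncomputable def TsallisEntropy {n : Type*} [Fintype n] [DecidableEq n]
    (A B : Matrix n n ℂ) (p : ℝ) : Matrix n n ℂ :=
  (1 / p : ℝ) • (natu A B p - A)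

/-- `J_p(A,B) = (1/2)(A #_p B - A ♮_{p-1} B + B - A)`. -/
noncomputable def Jp {n : Type*} [Fintype n] [DecidableEq n]
    (A B : Matrix n n ℂ) (p : ℝ) : Matrix n n ℂ :=
  (1 / 2 : ℝ) • (natu A B p - natu A B (p - 1) + B - A)

/-- `L_p(A,B) = (1/24)(p-1)(p-2)(A #_p B - 3 A ♮_{p-1} B + 3 A ♮_{p-2} B - A ♮_{p-3} B)`. -/
noncomputable def Lp {n : Type*} [Fintype n] [DecidableEq n]
    (A B : Matrix n n ℂ) (p : ℝ) : Matrix n n ℂ :=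
  ((1 / 24) * (p - 1) * (p - 2) : ℝ) •
    (natu A B p - (3 : ℝ) • natu A B (p - 1) + (3 : ℝ) • natu A B (p - 2) - natu A B (p - 3))

/-- `R_p(A,B) = (1/24)(p-1)(p-2)(A ♮_3 B - 3 A ♮_2 B + 3 B - A)`. -/
noncomputable def Rp {n : Type*} [Fintype n] [DecidableEq n]
    (A B : Matrix n n ℂ) (p : ℝ) : Matrix n n ℂ :=
  ((1 / 24) * (p - 1) * (p - 2) : ℝ) •
    (natu A B 3 - (3 : ℝ) • natu A B 2 + (3 : ℝ) • B - A)

/-! ### Auxiliary scalar lemmas -/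

private lemma nonneg_of_hasDerivAt {g g' : ℝ → ℝ}
    (hd : ∀ x ∈ Set.Ici (1:ℝ), HasDerivAt g (g' x) x)
    (h1 : g 1 = 0) (h' : ∀ x ∈ Set.Ici (1:ℝ), 0 ≤ g' x) :
    ∀ x ∈ Set.Ici (1:ℝ), 0 ≤ g x := by
  intro x hx
  have hmono : MonotoneOn g (Set.Ici 1) :=
    monotoneOn_of_deriv_nonneg (convex_Ici 1)
      (fun y hy => (hd y hy).continuousAt.continuousWithinAt)
      (fun y hy =>
        (hd y (interior_subset hy)).differentiableAt.differentiableWithinAt)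
      (fun y hy => by
        rw [(hd y (interior_subset hy)).deriv]
        exact h' y (interior_subset hy))
  have := hmono Set.self_mem_Ici hx hx
  rw [h1] at this
  exact this

private lemma drpow {x : ℝ} (hx : (0:ℝ) < x) (r : ℝ) :
    HasDerivAt (fun y : ℝ => y ^ r) (r * x ^ (r - 1)) x :=
  Real.hasDerivAt_rpow_const (Or.inl hx.ne')

section Core
variable {p : ℝ}

private lemma core_lower_2 (hp0 : 0 < p) (hp1 : p ≤ 1) :
    ∀ x ∈ Set.Ici (1:ℝ),
      0 ≤ (1/p - 1/2) * (p * ((p-1) * x ^ (p-2))) + 1/2 * ((p-1) * ((p-2) * x ^ (p-3)))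
        + (1/12)*(p-1)*(p-2) * (3 * (2 * x)) + (-(3 * ((1/12)*(p-1)*(p-2)))) * (2 * 1) := by
  intro x hx
  have hx1 : (1:ℝ) ≤ x := hx
  have hx0 : (0:ℝ) < x := lt_of_lt_of_le one_pos hx1
  have hsub : x ^ (p-2) = x ^ (p-3) * x := by
    rw [show p - 2 = (p - 3) + 1 by ring, Real.rpow_add_one hx0.ne']
  have h3 : x ^ (p-3) ≤ 1 := Real.rpow_le_one_of_one_le_of_nonpos hx1 (by linarith)
  have hfact : 0 ≤ ((p-1)*(p-2)/2) * ((x-1) * (1 - x ^ (p-3))) := by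
    apply mul_nonneg
    · nlinarith
    · exact mul_nonneg (by linarith) (by linarith)
  have heq : (1/p - 1/2) * (p * ((p-1) * x ^ (p-2))) + 1/2 * ((p-1) * ((p-2) * x ^ (p-3)))
        + (1/12)*(p-1)*(p-2) * (3 * (2 * x)) + (-(3 * ((1/12)*(p-1)*(p-2)))) * (2 * 1)
      = ((p-1)*(p-2)/2) * ((x-1) * (1 - x ^ (p-3))) := by
    rw [hsub]
    field_simp
    ring
  linarith [heq ▸ hfact]

private lemma core_upper_2 (hp0 : 0 < p) (hp1 : p ≤ 1) :
    ∀ x ∈ Set.Ici (1:ℝ),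
      0 ≤ (1/2 - 1/p - (1/12)*(p-1)*(p-2)) * (p * ((p-1) * x ^ (p-2)))
        + (3 * ((1/12)*(p-1)*(p-2)) - 1/2) * ((p-1) * ((p-2) * x ^ (p-3)))
        + (-(3 * ((1/12)*(p-1)*(p-2)))) * ((p-2) * ((p-3) * x ^ (p-4)))
        + (1/12)*(p-1)*(p-2) * ((p-3) * ((p-4) * x ^ (p-5))) := by
  intro x hx
  have hx1 : (1:ℝ) ≤ x := hx
  have hx0 : (0:ℝ) < x := lt_of_lt_of_le one_pos hx1
  have h2 : x ^ (p-2) = x ^ (p-5) * (x*x*x) := by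
    rw [show p - 2 = (p-5) + 1 + 1 + 1 by ring, Real.rpow_add_one (by positivity),
      Real.rpow_add_one (by positivity), Real.rpow_add_one hx0.ne']
    ring
  have h3 : x ^ (p-3) = x ^ (p-5) * (x*x) := by
    rw [show p - 3 = (p-5) + 1 + 1 by ring, Real.rpow_add_one (by positivity),
      Real.rpow_add_one hx0.ne']
    ring
  have h4 : x ^ (p-4) = x ^ (p-5) * x := by
    rw [show p - 4 = (p-5) + 1 by ring, Real.rpow_add_one hx0.ne']
  have hfact : 0 ≤ ((1-p)*(2-p)*(3-p)/12) * (x ^ (p-5) * ((x-1)*(x-1) * ((p+2)*x - (p-4)))) := by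
    apply mul_nonneg
    · have : 0 ≤ (1-p)*(2-p)*(3-p) :=
        mul_nonneg (mul_nonneg (by linarith) (by linarith)) (by linarith)
      linarith
    · refine mul_nonneg (Real.rpow_nonneg hx0.le _) (mul_nonneg (mul_self_nonneg _) ?_)
      nlinarith
  have heq : (1/2 - 1/p - (1/12)*(p-1)*(p-2)) * (p * ((p-1) * x ^ (p-2)))
        + (3 * ((1/12)*(p-1)*(p-2)) - 1/2) * ((p-1) * ((p-2) * x ^ (p-3)))
        + (-(3 * ((1/12)*(p-1)*(p-2)))) * ((p-2) * ((p-3) * x ^ (p-4)))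
        + (1/12)*(p-1)*(p-2) * ((p-3) * ((p-4) * x ^ (p-5)))
      = ((1-p)*(2-p)*(3-p)/12) * (x ^ (p-5) * ((x-1)*(x-1) * ((p+2)*x - (p-4)))) := by
    rw [h2, h3, h4]
    field_simp
    ring
  linarith [heq ▸ hfact]

private lemma core_lower_1 (hp0 : 0 < p) (hp1 : p ≤ 1) :
    ∀ x ∈ Set.Ici (1:ℝ),
      0 ≤ (1/p - 1/2) * (p * x ^ (p-1)) + 1/2 * ((p-1) * x ^ (p-2))
        + (1/12)*(p-1)*(p-2) * (3 * x ^ (2:ℕ)) + (-(3 * ((1/12)*(p-1)*(p-2)))) * (2 * x)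
        + (3 * ((1/12)*(p-1)*(p-2)) - 1/2) * 1 := by
  refine nonneg_of_hasDerivAt (fun x hx => ?_) ?_ (core_lower_2 hp0 hp1)
  · have hx0 : (0:ℝ) < x := lt_of_lt_of_le one_pos hx
    have d1 : HasDerivAt (fun y : ℝ => y ^ (p-1)) ((p-1) * x ^ (p-2)) x := by
      have := drpow hx0 (p-1); rwa [show p - 1 - 1 = p - 2 by ring] at this
    have d2 : HasDerivAt (fun y : ℝ => y ^ (p-2)) ((p-2) * x ^ (p-3)) x := by
      have := drpow hx0 (p-2); rwa [show p - 2 - 1 = p - 3 by ring] at this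
    have d3 : HasDerivAt (fun y : ℝ => y ^ (2:ℕ)) (2 * x) x := by
      simpa using hasDerivAt_pow 2 x
    have d4 : HasDerivAt (fun y : ℝ => y) 1 x := hasDerivAt_id' x
    exact ((((d1.const_mul p).const_mul (1/p - 1/2)).add
        ((d2.const_mul (p-1)).const_mul (1/2))).add
        ((d3.const_mul 3).const_mul ((1/12)*(p-1)*(p-2)))).add
        ((d4.const_mul 2).const_mul (-(3 * ((1/12)*(p-1)*(p-2))))) |>.add_const _
  · have hp' : p ≠ 0 := hp0.ne'
    simp only [Real.one_rpow, one_pow]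
    field_simp
    ring

private lemma core_lower_0 (hp0 : 0 < p) (hp1 : p ≤ 1) :
    ∀ x ∈ Set.Ici (1:ℝ),
      0 ≤ (1/p - 1/2) * x ^ p + 1/2 * x ^ (p-1) + (1/12)*(p-1)*(p-2) * x ^ (3:ℕ)
        + (-(3 * ((1/12)*(p-1)*(p-2)))) * x ^ (2:ℕ)
        + (3 * ((1/12)*(p-1)*(p-2)) - 1/2) * x + (1/2 - 1/p - (1/12)*(p-1)*(p-2)) := by
  refine nonneg_of_hasDerivAt (fun x hx => ?_) ?_ (core_lower_1 hp0 hp1)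
  · have hx0 : (0:ℝ) < x := lt_of_lt_of_le one_pos hx
    have d1 : HasDerivAt (fun y : ℝ => y ^ p) (p * x ^ (p-1)) x := drpow hx0 p
    have d2 : HasDerivAt (fun y : ℝ => y ^ (p-1)) ((p-1) * x ^ (p-2)) x := by
      have := drpow hx0 (p-1); rwa [show p - 1 - 1 = p - 2 by ring] at this
    have d3 : HasDerivAt (fun y : ℝ => y ^ (3:ℕ)) (3 * x ^ (2:ℕ)) x := by
      simpa using hasDerivAt_pow 3 x
    have d4 : HasDerivAt (fun y : ℝ => y ^ (2:ℕ)) (2 * x) x := by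
      simpa using hasDerivAt_pow 2 x
    have d5 : HasDerivAt (fun y : ℝ => y) 1 x := hasDerivAt_id' x
    exact ((((d1.const_mul (1/p - 1/2)).add (d2.const_mul (1/2))).add
        (d3.const_mul ((1/12)*(p-1)*(p-2)))).add
        (d4.const_mul (-(3 * ((1/12)*(p-1)*(p-2)))))).add
        (d5.const_mul (3 * ((1/12)*(p-1)*(p-2)) - 1/2)) |>.add_const _
  · have hp' : p ≠ 0 := hp0.ne'
    simp only [Real.one_rpow, one_pow, mul_one]
    field_simp
    ring

private lemma core_upper_1 (hp0 : 0 < p) (hp1 : p ≤ 1) :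
    ∀ x ∈ Set.Ici (1:ℝ),
      0 ≤ (1/2 - 1/p - (1/12)*(p-1)*(p-2)) * (p * x ^ (p-1))
        + (3 * ((1/12)*(p-1)*(p-2)) - 1/2) * ((p-1) * x ^ (p-2))
        + (-(3 * ((1/12)*(p-1)*(p-2)))) * ((p-2) * x ^ (p-3))
        + (1/12)*(p-1)*(p-2) * ((p-3) * x ^ (p-4)) + 1/2 * 1 := by
  refine nonneg_of_hasDerivAt (fun x hx => ?_) ?_ (core_upper_2 hp0 hp1)
  · have hx0 : (0:ℝ) < x := lt_of_lt_of_le one_pos hx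
    have d1 : HasDerivAt (fun y : ℝ => y ^ (p-1)) ((p-1) * x ^ (p-2)) x := by
      have := drpow hx0 (p-1); rwa [show p - 1 - 1 = p - 2 by ring] at this
    have d2 : HasDerivAt (fun y : ℝ => y ^ (p-2)) ((p-2) * x ^ (p-3)) x := by
      have := drpow hx0 (p-2); rwa [show p - 2 - 1 = p - 3 by ring] at this
    have d3 : HasDerivAt (fun y : ℝ => y ^ (p-3)) ((p-3) * x ^ (p-4)) x := by
      have := drpow hx0 (p-3); rwa [show p - 3 - 1 = p - 4 by ring] at this
    have d4 : HasDerivAt (fun y : ℝ => y ^ (p-4)) ((p-4) * x ^ (p-5)) x := by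
      have := drpow hx0 (p-4); rwa [show p - 4 - 1 = p - 5 by ring] at this
    exact ((((d1.const_mul p).const_mul (1/2 - 1/p - (1/12)*(p-1)*(p-2))).add
        ((d2.const_mul (p-1)).const_mul (3 * ((1/12)*(p-1)*(p-2)) - 1/2))).add
        ((d3.const_mul (p-2)).const_mul (-(3 * ((1/12)*(p-1)*(p-2)))))).add
        ((d4.const_mul (p-3)).const_mul ((1/12)*(p-1)*(p-2))) |>.add_const _
  · have hp' : p ≠ 0 := hp0.ne'
    simp only [Real.one_rpow, mul_one]
    field_simp
    ring

private lemma core_upper_0 (hp0 : 0 < p) (hp1 : p ≤ 1) :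
    ∀ x ∈ Set.Ici (1:ℝ),
      0 ≤ (1/2 - 1/p - (1/12)*(p-1)*(p-2)) * x ^ p
        + (3 * ((1/12)*(p-1)*(p-2)) - 1/2) * x ^ (p-1)
        + (-(3 * ((1/12)*(p-1)*(p-2)))) * x ^ (p-2)
        + (1/12)*(p-1)*(p-2) * x ^ (p-3) + 1/2 * x + (1/p - 1/2) := by
  refine nonneg_of_hasDerivAt (fun x hx => ?_) ?_ (core_upper_1 hp0 hp1)
  · have hx0 : (0:ℝ) < x := lt_of_lt_of_le one_pos hx
    have d1 : HasDerivAt (fun y : ℝ => y ^ p) (p * x ^ (p-1)) x := drpow hx0 p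
    have d2 : HasDerivAt (fun y : ℝ => y ^ (p-1)) ((p-1) * x ^ (p-2)) x := by
      have := drpow hx0 (p-1); rwa [show p - 1 - 1 = p - 2 by ring] at this
    have d3 : HasDerivAt (fun y : ℝ => y ^ (p-2)) ((p-2) * x ^ (p-3)) x := by
      have := drpow hx0 (p-2); rwa [show p - 2 - 1 = p - 3 by ring] at this
    have d4 : HasDerivAt (fun y : ℝ => y ^ (p-3)) ((p-3) * x ^ (p-4)) x := by
      have := drpow hx0 (p-3); rwa [show p - 3 - 1 = p - 4 by ring] at this
    have d5 : HasDerivAt (fun y : ℝ => y) 1 x := hasDerivAt_id' x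
    exact ((((d1.const_mul (1/2 - 1/p - (1/12)*(p-1)*(p-2))).add
        (d2.const_mul (3 * ((1/12)*(p-1)*(p-2)) - 1/2))).add
        (d3.const_mul (-(3 * ((1/12)*(p-1)*(p-2)))))).add
        (d4.const_mul ((1/12)*(p-1)*(p-2)))).add (d5.const_mul (1/2)) |>.add_const _
  · have hp' : p ≠ 0 := hp0.ne'
    simp only [Real.one_rpow, mul_one]
    field_simp
    ring

private lemma key_lower (hp0 : 0 < p) (hp1 : p ≤ 1) {x : ℝ} (hx : 1 ≤ x) :
    0 ≤ (1/p - 1/2) * x ^ p + 1/2 * x ^ (p-1) + (1/12)*(p-1)*(p-2) * x ^ (3:ℝ)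
      + (-(3 * ((1/12)*(p-1)*(p-2)))) * x ^ (2:ℝ)
      + (3 * ((1/12)*(p-1)*(p-2)) - 1/2) * x ^ (1:ℝ)
      + (1/2 - 1/p - (1/12)*(p-1)*(p-2)) * x ^ (0:ℝ) := by
  have h3 : x ^ (3:ℝ) = x ^ (3:ℕ) := by
    rw [← Real.rpow_natCast x 3]; norm_num
  have h2 : x ^ (2:ℝ) = x ^ (2:ℕ) := by
    rw [← Real.rpow_natCast x 2]; norm_num
  rw [h3, h2, Real.rpow_one, Real.rpow_zero, mul_one]
  exact core_lower_0 hp0 hp1 x hx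

private lemma key_upper (hp0 : 0 < p) (hp1 : p ≤ 1) {x : ℝ} (hx : 1 ≤ x) :
    0 ≤ (1/2 - 1/p - (1/12)*(p-1)*(p-2)) * x ^ p
      + (3 * ((1/12)*(p-1)*(p-2)) - 1/2) * x ^ (p-1)
      + (-(3 * ((1/12)*(p-1)*(p-2)))) * x ^ (p-2)
      + (1/12)*(p-1)*(p-2) * x ^ (p-3) + 1/2 * x ^ (1:ℝ) + (1/p - 1/2) * x ^ (0:ℝ) := by
  rw [Real.rpow_one, Real.rpow_zero, mul_one]
  exact core_upper_0 hp0 hp1 x hx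

end Core

/-! ### Auxiliary matrix lemmas -/

section MatrixAux
set_option linter.unusedSectionVars false
variable {n : Type*} [Fintype n] [DecidableEq n]

private lemma contOn (M : Matrix n n ℂ) (f : ℝ → ℝ) : ContinuousOn f (spectrum ℝ M) := by
  have : Finite (spectrum ℝ M) := M.finite_real_spectrum
  have : DiscreteTopology (spectrum ℝ M) := Finite.instDiscreteTopology
  rw [continuousOn_iff_continuous_restrict]
  exact continuous_of_discreteTopology

private lemma conj_psd {S M : Matrix n n ℂ} (hS : S.IsHermitian) (hM : M.PosSemidef) :
    (S * M * S).PosSemidef := by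
  have := hM.mul_mul_conjTranspose_same S
  rwa [hS.eq] at this

private lemma spec_pos {A : Matrix n n ℂ} (hA : A.PosDef) : ∀ x ∈ spectrum ℝ A, 0 < x := by
  intro x hx
  rw [Matrix.IsHermitian.spectrum_real_eq_range_eigenvalues hA.1] at hx
  obtain ⟨i, hi⟩ := hx
  exact hi ▸ hA.eigenvalues_pos i

private lemma one_le_spec {C : Matrix n n ℂ} (h : (C - 1).PosSemidef) :
    ∀ x ∈ spectrum ℝ C, 1 ≤ x := by
  intro x hx
  have h1 : x - 1 ∈ spectrum ℝ (C - 1) := by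
    have heq := spectrum.sub_singleton_eq (R := ℝ) C (1 : ℝ)
    rw [_root_.map_one] at heq
    rw [← heq]
    exact Set.sub_mem_sub hx rfl
  rw [Matrix.IsHermitian.spectrum_real_eq_range_eigenvalues h.1] at h1
  obtain ⟨i, hi⟩ := h1
  have := h.eigenvalues_nonneg i
  rw [hi] at this
  linarith

private lemma cfc_psd {C : Matrix n n ℂ} (hC : C.IsHermitian) {f : ℝ → ℝ}
    (hf : ∀ x ∈ spectrum ℝ C, 0 ≤ f x) : (cfc f C).PosSemidef := by
  rw [hC.cfc_eq]
  unfold Matrix.IsHermitian.cfc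
  have hd : (Matrix.diagonal (RCLike.ofReal ∘ f ∘ hC.eigenvalues) : Matrix n n ℂ).PosSemidef := by
    refine Matrix.posSemidef_diagonal_iff.mpr fun i => ?_
    have := hf _ (hC.eigenvalues_mem_spectrum_real i)
    simpa using this
  have := hd.mul_mul_conjTranspose_same (hC.eigenvectorUnitary : Matrix n n ℂ)
  rwa [← star_eq_conjTranspose] at this

private lemma mrpow_isSelfAdjoint (A : Matrix n n ℂ) (r : ℝ) : IsSelfAdjoint (mrpow A r) :=
  cfc_predicate _ _

private lemma mrpow_mul {A : Matrix n n ℂ} (hA : A.PosDef) (r s : ℝ) :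
    mrpow A r * mrpow A s = mrpow A (r + s) := by
  unfold mrpow
  rw [← cfc_mul _ _ A (contOn A _) (contOn A _)]
  exact cfc_congr fun x hx => (Real.rpow_add (spec_pos hA x hx) r s).symm

private lemma mrpow_zero {A : Matrix n n ℂ} (hA : IsSelfAdjoint A) : mrpow A 0 = 1 := by
  unfold mrpow
  rw [cfc_congr (g := fun _ : ℝ => (1:ℝ)) fun x _ => Real.rpow_zero x]
  exact cfc_one ℝ A

private lemma mrpow_one {A : Matrix n n ℂ} (hA : IsSelfAdjoint A) : mrpow A 1 = A := by
  unfold mrpow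
  rw [cfc_congr (g := fun x : ℝ => x) fun x _ => Real.rpow_one x]
  exact cfc_id' ℝ A

private lemma cfc_comb6 {C : Matrix n n ℂ} (hC : IsSelfAdjoint C)
    (c₁ c₂ c₃ c₄ c₅ c₆ r₁ r₂ r₃ r₄ r₅ r₆ : ℝ) :
    cfc (fun x : ℝ => c₁ * x ^ r₁ + c₂ * x ^ r₂ + c₃ * x ^ r₃ + c₄ * x ^ r₄ + c₅ * x ^ r₅
        + c₆ * x ^ r₆) C
      = c₁ • mrpow C r₁ + c₂ • mrpow C r₂ + c₃ • mrpow C r₃ + c₄ • mrpow C r₄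
        + c₅ • mrpow C r₅ + c₆ • mrpow C r₆ := by
  rw [cfc_add _ _ _ (contOn C _) (contOn C _),
      cfc_add _ _ _ (contOn C _) (contOn C _),
      cfc_add _ _ _ (contOn C _) (contOn C _),
      cfc_add _ _ _ (contOn C _) (contOn C _),
      cfc_add _ _ _ (contOn C _) (contOn C _),
      cfc_const_mul _ _ _ (contOn C _),
      cfc_const_mul _ _ _ (contOn C _),
      cfc_const_mul _ _ _ (contOn C _),
      cfc_const_mul _ _ _ (contOn C _),
      cfc_const_mul _ _ _ (contOn C _),
      cfc_const_mul _ _ _ (contOn C _)]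
  rfl

end MatrixAux

theorem stmt11 {n : Type*} [Fintype n] [DecidableEq n] {A B : Matrix n n ℂ}
    (hA : A.PosDef) (hB : B.PosDef) (hAB : loe A B)
    {p : ℝ} (hp0 : 0 < p) (hp1 : p ≤ 1) :
    loe (Jp A B p - (2 : ℝ) • Rp A B p) (TsallisEntropy A B p) ∧
    loe (TsallisEntropy A B p) (Jp A B p - (2 : ℝ) • Lp A B p) := by
  have hAsa : IsSelfAdjoint A := hA.1.isSelfAdjoint
  set S := mrpow A (1 / 2) with hS_def
  set Si := mrpow A (-(1 / 2)) with hSi_def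
  set C := Si * B * Si with hC_def
  have hSsa : IsSelfAdjoint S := mrpow_isSelfAdjoint A _
  have hSisa : IsSelfAdjoint Si := mrpow_isSelfAdjoint A _
  have hSh : S.IsHermitian := hSsa
  have hSih : Si.IsHermitian := hSisa
  have hSSi : S * Si = 1 := by
    rw [hS_def, hSi_def, mrpow_mul hA, show (1/2 : ℝ) + -(1/2) = 0 by norm_num,
      mrpow_zero hAsa]
  have hSiS : Si * S = 1 := by
    rw [hS_def, hSi_def, mrpow_mul hA, show (-(1/2) : ℝ) + 1/2 = 0 by norm_num,
      mrpow_zero hAsa]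
  have hSS : S * S = A := by
    rw [hS_def, mrpow_mul hA, show (1/2 : ℝ) + 1/2 = 1 by norm_num, mrpow_one hAsa]
  have hCh : C.IsHermitian := by
    have h' := Matrix.isHermitian_conjTranspose_mul_mul Si hB.1
    rw [hSih.eq] at h'
    rw [hC_def]
    exact h'
  have hCsa : IsSelfAdjoint C := hCh.isSelfAdjoint
  have hSiASi : Si * A * Si = 1 := by
    rw [← hSS]
    have e : Si * (S * S) * Si = (Si * S) * (S * Si) := by noncomm_ring
    rw [e, hSiS, hSSi, one_mul]
  have hC1 : (C - 1).PosSemidef := by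
    have h' := hAB.conjTranspose_mul_mul_same Si
    rw [hSih.eq] at h'
    have e : C - 1 = Si * (B - A) * Si := by
      rw [hC_def, Matrix.mul_sub, Matrix.sub_mul, hSiASi]
    rw [e]
    exact h'
  have hspec1 : ∀ x ∈ spectrum ℝ C, 1 ≤ x := one_le_spec hC1
  have hnat : ∀ r, natu A B r = S * mrpow C r * S := by
    intro r
    rw [hC_def, hSi_def, hS_def]
    rfl
  have hBr : S * mrpow C 1 * S = B := by
    rw [mrpow_one hCsa, hC_def]
    have e : S * (Si * B * Si) * S = (S * Si) * B * (Si * S) := by noncomm_ring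
    rw [e, hSSi, hSiS, one_mul, mul_one]
  have hAr : S * mrpow C 0 * S = A := by
    rw [mrpow_zero hCsa, mul_one, hSS]
  constructor
  · -- lower bound
    show (TsallisEntropy A B p - (Jp A B p - (2 : ℝ) • Rp A B p)).PosSemidef
    have hexp := cfc_comb6 hCsa (1/p - 1/2) (1/2) ((1/12)*(p-1)*(p-2))
      (-(3 * ((1/12)*(p-1)*(p-2)))) (3 * ((1/12)*(p-1)*(p-2)) - 1/2)
      (1/2 - 1/p - (1/12)*(p-1)*(p-2)) p (p-1) 3 2 1 0
    have hkey : TsallisEntropy A B p - (Jp A B p - (2 : ℝ) • Rp A B p)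
        = S * cfc (fun x : ℝ => (1/p - 1/2) * x ^ p + 1/2 * x ^ (p-1)
            + (1/12)*(p-1)*(p-2) * x ^ (3:ℝ) + (-(3 * ((1/12)*(p-1)*(p-2)))) * x ^ (2:ℝ)
            + (3 * ((1/12)*(p-1)*(p-2)) - 1/2) * x ^ (1:ℝ)
            + (1/2 - 1/p - (1/12)*(p-1)*(p-2)) * x ^ (0:ℝ)) C * S := by
      rw [hexp]
      simp only [TsallisEntropy, Jp, Rp, hnat]
      rw [← hBr, ← hAr]
      simp only [Matrix.mul_add, Matrix.add_mul, Matrix.mul_sub, Matrix.sub_mul,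
        mul_smul_comm, smul_mul_assoc, Matrix.mul_assoc]
      module
    rw [hkey]
    exact conj_psd hSh (cfc_psd hCh fun x hx => key_lower hp0 hp1 (hspec1 x hx))
  · -- upper bound
    show (Jp A B p - (2 : ℝ) • Lp A B p - TsallisEntropy A B p).PosSemidef
    have hexp := cfc_comb6 hCsa (1/2 - 1/p - (1/12)*(p-1)*(p-2))
      (3 * ((1/12)*(p-1)*(p-2)) - 1/2) (-(3 * ((1/12)*(p-1)*(p-2)))) ((1/12)*(p-1)*(p-2))
      (1/2) (1/p - 1/2) p (p-1) (p-2) (p-3) 1 0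
    have hkey : Jp A B p - (2 : ℝ) • Lp A B p - TsallisEntropy A B p
        = S * cfc (fun x : ℝ => (1/2 - 1/p - (1/12)*(p-1)*(p-2)) * x ^ p
            + (3 * ((1/12)*(p-1)*(p-2)) - 1/2) * x ^ (p-1)
            + (-(3 * ((1/12)*(p-1)*(p-2)))) * x ^ (p-2)
            + (1/12)*(p-1)*(p-2) * x ^ (p-3) + 1/2 * x ^ (1:ℝ)
            + (1/p - 1/2) * x ^ (0:ℝ)) C * S := by
      rw [hexp]
      simp only [TsallisEntropy, Jp, Lp, hnat]
      rw [← hBr, ← hAr]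
      simp only [Matrix.mul_add, Matrix.add_mul, Matrix.mul_sub, Matrix.sub_mul,
        mul_smul_comm, smul_mul_assoc, Matrix.mul_assoc]
      module
    rw [hkey]
    exact conj_psd hSh (cfc_psd hCh fun x hx => key_upper hp0 hp1 (hspec1 x hx))
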